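/- Let E ∈ ℂ[x,y] be nonconstant and let α(z) = z^k + e_{k−2}z^{k−2} + ... + e_0 be a Tschirnhausen polynomial of degree k ≥ 1. Then the Newton polygon satisfies N⁰(α(E)) = k · N⁰(E), where N⁰(f) denotes the convex hull of supp(f) ∪ {(0,0)} and k·S denotes the dilation of S by factor k. -/

import Mathlib

open MvPolynomial

noncomputable section

abbrev R2 : Type := MvPolynomial (Fin 2) ℂ

/-- The (0,1)-homogeneous component of `f` of degree `j` (terms with y-exponent `j`). -/
def comp01 (f : R2) (j : ℕ) : R2 :=
  ∑ d ∈ f.support.filter (fun d => d 1 = j), MvPolynomial.monomial d (f.coeff d)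

/-- The total-degree (i.e. (1,1)-)homogeneous component of `f` of degree `j`. -/
def comp11 (f : R2) (j : ℕ) : R2 :=
  ∑ d ∈ f.support.filter (fun d => d 0 + d 1 = j), MvPolynomial.monomial d (f.coeff d)

/-- The exponent vector of a monomial, as a point of `ℝ²`. -/
def toR2pt (d : Fin 2 →₀ ℕ) : ℝ × ℝ := ((d 0 : ℝ), (d 1 : ℝ))

/-- The support of `f`, as a subset of `ℝ²`. -/
def suppSet (f : R2) : Set (ℝ × ℝ) := toR2pt '' (f.support : Set (Fin 2 →₀ ℕ))

/-- The augmented Newton polygon `N⁰(f)`: convex hull of the support together with the origin. -/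
def newton0 (f : R2) : Set (ℝ × ℝ) := convexHull ℝ (insert (0, 0) (suppSet f))

/-- The trapezoid `T_{m,n}` with vertices `(0,0), (m+n,0), (m,n), (0,n)`. -/
def Tset (m n : ℝ) : Set (ℝ × ℝ) := {p | 0 ≤ p.2 ∧ p.2 ≤ n ∧ 0 ≤ p.1 ∧ p.1 ≤ m + n - p.2}

/-- The region `𝒩'' = T_{m/a, n/a} + ((a-1)/a)·(m,n)`. -/
def NsetPP (m n a : ℕ) : Set (ℝ × ℝ) :=
  (fun p : ℝ × ℝ => (p.1 + ((a : ℝ) - 1) * m / a, p.2 + ((a : ℝ) - 1) * n / a)) ''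
    Tset ((m : ℝ) / a) ((n : ℝ) / a)

/-- The Jacobian determinant `[f,g] = f_x g_y - f_y g_x`. -/
def jacDet (f g : R2) : R2 :=
  pderiv 0 f * pderiv 1 g - pderiv 1 f * pderiv 0 g

lemma toR2pt_add (a b : Fin 2 →₀ ℕ) : toR2pt (a + b) = toR2pt a + toR2pt b := by
  simp [toR2pt, Prod.ext_iff]

lemma toR2pt_zero : toR2pt 0 = (0 : ℝ × ℝ) := by
  simp [toR2pt, Prod.ext_iff]

lemma toR2pt_inj {a b : Fin 2 →₀ ℕ} (h : toR2pt a = toR2pt b) : a = b := by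
  rw [toR2pt, toR2pt, Prod.ext_iff] at h
  ext i
  fin_cases i
  · simpa using Nat.cast_injective (R := ℝ) h.1
  · simpa using Nat.cast_injective (R := ℝ) h.2

lemma toR2pt_nsmul (n : ℕ) (d : Fin 2 →₀ ℕ) : toR2pt (n • d) = (n : ℝ) • toR2pt d := by
  simp only [toR2pt, Prod.smul_mk, Finsupp.smul_apply, smul_eq_mul, Prod.mk.injEq]
  constructor <;> push_cast <;> ring

lemma exists_add_of_mem_support_mul {f g : R2} {a : Fin 2 →₀ ℕ}
    (ha : a ∈ (f * g).support) :
    ∃ b ∈ f.support, ∃ c ∈ g.support, b + c = a := by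
  rw [mem_support_iff, coeff_mul] at ha
  obtain ⟨x, hx, hne⟩ := Finset.exists_ne_zero_of_sum_ne_zero ha
  exact ⟨x.1, mem_support_iff.2 (left_ne_zero_of_mul hne), x.2,
    mem_support_iff.2 (right_ne_zero_of_mul hne), Finset.HasAntidiagonal.mem_antidiagonal.1 hx⟩

lemma pow_coeff_max (f : R2) (L : (ℝ × ℝ) →L[ℝ] ℝ) (d : Fin 2 →₀ ℕ)
    (hmax : ∀ e ∈ f.support, e ≠ d → L (toR2pt e) < L (toR2pt d)) (i : ℕ) :
    MvPolynomial.coeff (i • d) (f ^ i) = (MvPolynomial.coeff d f) ^ i ∧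
      ∀ a ∈ (f ^ i).support,
        L (toR2pt a) ≤ (i : ℝ) * L (toR2pt d) ∧
          (a ≠ i • d → L (toR2pt a) < (i : ℝ) * L (toR2pt d)) := by
  induction i with
  | zero =>
    refine ⟨by simp, ?_⟩
    intro a ha
    have ha0 : a = 0 := by
      rw [mem_support_iff] at ha
      by_contra h
      simp [MvPolynomial.coeff_one, eq_comm, h] at ha
    subst ha0
    constructor
    · simp [toR2pt_zero]
    · intro h; exact absurd (zero_smul ℕ d).symm h
  | succ i ih =>
    obtain ⟨ihc, ihs⟩ := ih
    have key : ∀ b ∈ (f ^ i).support, ∀ c ∈ f.support,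
        L (toR2pt b) + L (toR2pt c) ≤ ((i : ℝ) + 1) * L (toR2pt d) ∧
          ((b, c) ≠ (i • d, d) →
            L (toR2pt b) + L (toR2pt c) < ((i : ℝ) + 1) * L (toR2pt d)) := by
      intro b hb c hc
      have h1 := ihs b hb
      have h2 : L (toR2pt c) ≤ L (toR2pt d) := by
        rcases eq_or_ne c d with rfl | h
        · exact le_refl _
        · exact (hmax c hc h).le
      refine ⟨by nlinarith [h1.1], ?_⟩
      intro hne
      rcases eq_or_ne b (i • d) with rfl | hb'
      · have hcd : c ≠ d := fun h => hne (by simp [h])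
        have := hmax c hc hcd
        nlinarith [h1.1]
      · have := h1.2 hb'
        nlinarith
    have hanti : ((i • d, d) : (Fin 2 →₀ ℕ) × (Fin 2 →₀ ℕ)) ∈
        Finset.HasAntidiagonal.antidiagonal ((i + 1) • d) := by
      rw [Finset.HasAntidiagonal.mem_antidiagonal, succ_nsmul]
    constructor
    · rw [pow_succ, coeff_mul, Finset.sum_eq_single_of_mem _ hanti]
      · rw [ihc, pow_succ]
      · intro x hx hne
        by_contra h
        have hb : x.1 ∈ (f ^ i).support := mem_support_iff.2 (left_ne_zero_of_mul h)
        have hc : x.2 ∈ f.support := mem_support_iff.2 (right_ne_zero_of_mul h)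
        have hsum : L (toR2pt x.1) + L (toR2pt x.2) = ((i : ℝ) + 1) * L (toR2pt d) := by
          rw [← map_add, ← toR2pt_add, Finset.HasAntidiagonal.mem_antidiagonal.1 hx, toR2pt_nsmul, map_smul,
            smul_eq_mul]
          push_cast; ring
        have hstrict := (key x.1 hb x.2 hc).2 (by rw [Prod.mk.eta]; exact hne)
        linarith
    · intro a ha
      rw [pow_succ] at ha
      obtain ⟨b, hb, c, hc, rfl⟩ := exists_add_of_mem_support_mul ha
      have hk := key b hb c hc
      rw [toR2pt_add, map_add]
      constructor
      · push_cast; exact hk.1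
      · intro hne
        push_cast
        refine hk.2 ?_
        rintro heq
        rw [Prod.mk.injEq] at heq
        exact hne (by rw [heq.1, heq.2, succ_nsmul])

lemma newton0_convex (f : R2) : Convex ℝ (newton0 f) := convex_convexHull ℝ _

lemma zero_mem_newton0 (f : R2) : ((0, 0) : ℝ × ℝ) ∈ newton0 f :=
  subset_convexHull ℝ _ (Set.mem_insert _ _)

lemma suppSet_subset_newton0 (f : R2) : suppSet f ⊆ newton0 f :=
  fun _ hp => subset_convexHull ℝ _ (Set.mem_insert_of_mem _ hp)

lemma suppSet_finite (f : R2) : (suppSet f).Finite :=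
  f.support.finite_toSet.image _

lemma mem_smul_newton0 {f : R2} {i k : ℕ} (hik : i ≤ k) {p : ℝ × ℝ}
    (hp : p ∈ newton0 f) :
    (i : ℝ) • p ∈ (fun q : ℝ × ℝ => (k : ℝ) • q) '' newton0 f := by
  rcases Nat.eq_zero_or_pos k with rfl | hkpos
  · obtain rfl : i = 0 := Nat.le_zero.1 hik
    exact ⟨p, hp, by simp⟩
  · have hk0 : (0 : ℝ) < k := by exact_mod_cast hkpos
    have hik' : (i : ℝ) ≤ k := by exact_mod_cast hik
    refine ⟨((i : ℝ) / k) • p + (1 - (i : ℝ) / k) • ((0, 0) : ℝ × ℝ), ?_, ?_⟩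
    · exact (newton0_convex f) hp (zero_mem_newton0 f) (by positivity)
        (by rw [sub_nonneg]; exact div_le_one_of_le₀ hik' hk0.le)
        (by ring)
    · have h00 : ((0, 0) : ℝ × ℝ) = 0 := rfl
      rw [h00, smul_zero, add_zero]
      show (k : ℝ) • (((i : ℝ) / k) • p) = (i : ℝ) • p
      rw [smul_smul]
      congr 1
      field_simp

lemma supp_pow_mem (f : R2) (i : ℕ) {a : Fin 2 →₀ ℕ} (ha : a ∈ (f ^ i).support) :
    toR2pt a ∈ (fun q : ℝ × ℝ => (i : ℝ) • q) '' newton0 f := by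
  induction i generalizing a with
  | zero =>
    have ha0 : a = 0 := by
      rw [mem_support_iff] at ha
      by_contra h
      simp [MvPolynomial.coeff_one, eq_comm, h] at ha
    exact ⟨(0, 0), zero_mem_newton0 f, by simp [ha0, toR2pt_zero]⟩
  | succ i ih =>
    rw [pow_succ] at ha
    obtain ⟨b, hb, c, hc, rfl⟩ := exists_add_of_mem_support_mul ha
    obtain ⟨p, hp, hbp⟩ := ih hb
    have hcq : toR2pt c ∈ newton0 f := suppSet_subset_newton0 f ⟨c, hc, rfl⟩
    have hi1 : (0 : ℝ) < (i : ℝ) + 1 := by positivity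
    refine ⟨((i : ℝ) / ((i : ℝ) + 1)) • p + (1 / ((i : ℝ) + 1)) • toR2pt c, ?_, ?_⟩
    · exact (newton0_convex f) hp hcq (by positivity) (by positivity) (by field_simp)
    · show ((i + 1 : ℕ) : ℝ) • (((i : ℝ) / ((i : ℝ) + 1)) • p + (1 / ((i : ℝ) + 1)) • toR2pt c)
        = toR2pt (b + c)
      rw [toR2pt_add, ← hbp]
      push_cast
      rw [smul_add, smul_smul, smul_smul]
      congr 2
      · field_simp
      · field_simp
        exact one_smul _ _

lemma supp_aeval_subset (E : R2) (α : Polynomial ℂ) {a : Fin 2 →₀ ℕ}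
    (ha : a ∈ (Polynomial.aeval E α).support) :
    ∃ i ≤ α.natDegree, a ∈ (E ^ i).support := by
  rw [Polynomial.aeval_eq_sum_range, mem_support_iff] at ha
  rw [MvPolynomial.coeff_sum] at ha
  obtain ⟨i, hi, hne⟩ := Finset.exists_ne_zero_of_sum_ne_zero ha
  rw [MvPolynomial.coeff_smul] at hne
  exact ⟨i, Nat.lt_succ_iff.1 (Finset.mem_range.1 hi),
    mem_support_iff.2 (right_ne_zero_of_smul hne)⟩

lemma extreme_not_mem_hull_diff {B : Set (ℝ × ℝ)} {x : ℝ × ℝ}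
    (hx : x ∈ (convexHull ℝ B).extremePoints ℝ) : x ∉ convexHull ℝ (B \ {x}) := by
  have h := (convex_convexHull ℝ B).mem_extremePoints_iff_mem_diff_convexHull_diff.1 hx
  intro hmem
  exact h.2 (convexHull_mono (Set.diff_subset_diff_left (subset_convexHull ℝ B)) hmem)


/-- for nonconstant `E` and a Tschirnhausen polynomial `α` of degree `k ≥ 1`,
`N⁰(α(E)) = k · N⁰(E)`. -/
theorem stmt8 (E : R2) (hE : ∀ c : ℂ, E ≠ MvPolynomial.C c) (k : ℕ) (hk : 1 ≤ k)
    (α : Polynomial ℂ) (hmon : α.Monic) (hdeg : α.natDegree = k)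
    (hcoeff : α.coeff (k - 1) = 0) :
    newton0 (Polynomial.aeval E α) = (fun p : ℝ × ℝ => (k : ℝ) • p) '' newton0 E := by
  have hk0 : (0 : ℝ) < k := by exact_mod_cast hk
  set K := (fun p : ℝ × ℝ => (k : ℝ) • p) '' newton0 E with hKdef
  set B : Set (ℝ × ℝ) :=
    insert (0, 0) ((fun p : ℝ × ℝ => (k : ℝ) • p) '' suppSet E) with hBdef
  have hBfin : B.Finite := ((suppSet_finite E).image _).insert _
  have hKB : K = convexHull ℝ B := by
    rw [hKdef, newton0, (IsLinearMap.isLinearMap_smul ((k : ℝ))).image_convexHull]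
    congr 1
    rw [Set.image_insert_eq]
    congr 1
    exact smul_zero _
  have hKconv : Convex ℝ K := by rw [hKB]; exact convex_convexHull ℝ _
  have hKcomp : IsCompact K := by rw [hKB]; exact hBfin.isCompact_convexHull ℝ
  -- upper bound
  have upper : newton0 (Polynomial.aeval E α) ⊆ K := by
    apply convexHull_min _ hKconv
    rintro p (rfl | ⟨a, ha, rfl⟩)
    · exact ⟨(0, 0), zero_mem_newton0 E, by simp⟩
    · obtain ⟨i, hi, hai⟩ := supp_aeval_subset E α ha
      obtain ⟨q, hq, hq2⟩ := supp_pow_mem E i hai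
      rw [← hq2]
      exact mem_smul_newton0 (hdeg ▸ hi) hq
  -- extreme points lie in the support of α(E) (or are the origin)
  have hext : K.extremePoints ℝ ⊆
      insert ((0, 0) : ℝ × ℝ) (suppSet (Polynomial.aeval E α)) := by
    intro v hv
    have hvK : v ∈ (convexHull ℝ B).extremePoints ℝ := by rwa [← hKB]
    have hvB : v ∈ B := extremePoints_convexHull_subset hvK
    rcases hvB with rfl | ⟨w, ⟨d, hd, rfl⟩, rfl⟩
    · exact Set.mem_insert _ _
    · by_cases hv0 : (k : ℝ) • toR2pt d = ((0, 0) : ℝ × ℝ)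
      · show (k : ℝ) • toR2pt d ∈ _
        rw [hv0]; exact Set.mem_insert _ _
      · -- separating functional
        have hnm : (k : ℝ) • toR2pt d ∉ convexHull ℝ (B \ {(k : ℝ) • toR2pt d}) :=
          extreme_not_mem_hull_diff hvK
        have hclosed : IsClosed (convexHull ℝ (B \ {(k : ℝ) • toR2pt d})) :=
          ((hBfin.diff).isCompact_convexHull ℝ).isClosed
        obtain ⟨L, u, hLb, hLv⟩ := geometric_hahn_banach_closed_point
          (convex_convexHull ℝ _) hclosed hnm
        have hsep : ∀ b ∈ B, b ≠ (k : ℝ) • toR2pt d → L b < L ((k : ℝ) • toR2pt d) :=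
          fun b hb hbv => (hLb b (subset_convexHull ℝ _ ⟨hb, hbv⟩)).trans hLv
        have hLvM : L ((k : ℝ) • toR2pt d) = (k : ℝ) * L (toR2pt d) := by
          rw [map_smul, smul_eq_mul]
        have hMpos : 0 < L (toR2pt d) := by
          have h0 : L (0, 0) < L ((k : ℝ) • toR2pt d) :=
            hsep (0, 0) (Set.mem_insert _ _) (fun h => hv0 h.symm)
          have hz : L ((0, 0) : ℝ × ℝ) = 0 := by
            rw [show ((0, 0) : ℝ × ℝ) = 0 from rfl, map_zero]
          rw [hz, hLvM] at h0
          nlinarith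
        have hmax : ∀ e ∈ E.support, e ≠ d → L (toR2pt e) < L (toR2pt d) := by
          intro e he hed
          have hmemB : (k : ℝ) • toR2pt e ∈ B :=
            Set.mem_insert_of_mem _ ⟨toR2pt e, ⟨e, he, rfl⟩, rfl⟩
          have hne : (k : ℝ) • toR2pt e ≠ (k : ℝ) • toR2pt d := by
            intro h
            exact hed (toR2pt_inj (smul_right_injective (ℝ × ℝ) (ne_of_gt hk0) h))
          have := hsep _ hmemB hne
          rw [hLvM, map_smul, smul_eq_mul] at this
          exact lt_of_mul_lt_mul_left this hk0.le
        have hpow := pow_coeff_max E L d hmax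
        have hcoeffk : MvPolynomial.coeff (k • d) (E ^ k) =
            (MvPolynomial.coeff d E) ^ k := (hpow k).1
        have hlow : ∀ i < k, MvPolynomial.coeff (k • d) (E ^ i) = 0 := by
          intro i hik
          by_contra h
          have hmem : (k • d) ∈ (E ^ i).support := mem_support_iff.2 h
          have hb := ((hpow i).2 _ hmem).1
          rw [toR2pt_nsmul, map_smul, smul_eq_mul] at hb
          have hik' : (i : ℝ) < k := by exact_mod_cast hik
          nlinarith
        have hco : MvPolynomial.coeff (k • d) (Polynomial.aeval E α) =
            (MvPolynomial.coeff d E) ^ k := by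
          rw [Polynomial.aeval_eq_sum_range, MvPolynomial.coeff_sum, hdeg,
            Finset.sum_eq_single k]
          · rw [MvPolynomial.coeff_smul, hcoeffk, ← hdeg, Polynomial.Monic.coeff_natDegree hmon,
              one_smul]
          · intro i hi hne
            rw [MvPolynomial.coeff_smul,
              hlow i (lt_of_le_of_ne (Nat.lt_succ_iff.1 (Finset.mem_range.1 hi)) hne),
              smul_zero]
          · intro h
            exact absurd (Finset.mem_range.2 (Nat.lt_succ_self k)) h
        have hmem : (k • d) ∈ (Polynomial.aeval E α).support :=
          mem_support_iff.2 (by rw [hco]; exact pow_ne_zero _ (mem_support_iff.1 hd))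
        exact Set.mem_insert_of_mem _ ⟨k • d, hmem, toR2pt_nsmul k d⟩
  -- lower bound
  have lower : K ⊆ newton0 (Polynomial.aeval E α) := by
    have hfin : (K.extremePoints ℝ).Finite :=
      hBfin.subset (by rw [hKB]; exact extremePoints_convexHull_subset)
    have hKeq : K = convexHull ℝ (K.extremePoints ℝ) :=
      (closure_convexHull_extremePoints hKcomp hKconv).symm.trans
        (hfin.isCompact_convexHull ℝ).isClosed.closure_eq
    nth_rewrite 1 [hKeq]
    exact convexHull_min (fun x hx => subset_convexHull ℝ _ (hext hx)) (convex_convexHull ℝ _)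
  exact upper.antisymm lower
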